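/- Let A be an effect on ℂ² with spectral decomposition A = λ₁P + λ₂(I-P) where P is a rank-one projection and 1 > λ₁ > λ₂ > 0. Then both λ₁P and (1-λ₂)(I-P) have the property that every effect coexistent with them is coexistent with A; that is, (λ₁P)^∼ ⊆ A^∼ and ((1-λ₂)(I-P))^∼ ⊆ A^∼. -/

import Mathlib

noncomputable section

/-- An effect on a complex Hilbert space: a positive operator below the identity. -/
def IsEffect {H : Type*} [NormedAddCommGroup H] [InnerProductSpace ℂ H] [CompleteSpace H]
    (A : H →L[ℂ] H) : Prop :=
  A.IsPositive ∧ ((1 : H →L[ℂ] H) - A).IsPositive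

/-- Effects `A`, `B` are coexistent: there are effects `M ≤ A`, `N ≤ I - A` with `M + N = B`. -/
def Coexistent {H : Type*} [NormedAddCommGroup H] [InnerProductSpace ℂ H] [CompleteSpace H]
    (A B : H →L[ℂ] H) : Prop :=
  ∃ M N : H →L[ℂ] H, IsEffect M ∧ IsEffect N ∧
    (A - M).IsPositive ∧ (((1 : H →L[ℂ] H) - A) - N).IsPositive ∧ M + N = B

/-- A rank-one orthogonal projection. -/
def IsRankOneProjection {H : Type*} [NormedAddCommGroup H] [InnerProductSpace ℂ H]
    [CompleteSpace H] (P : H →L[ℂ] H) : Prop :=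
  IsSelfAdjoint P ∧ P ∘L P = P ∧ Module.finrank ℂ (LinearMap.range (P : H →ₗ[ℂ] H)) = 1

/-- The strength function `Λ(B,P) = sup {λ ≥ 0 : λP ≤ B}`. -/
def strength {H : Type*} [NormedAddCommGroup H] [InnerProductSpace ℂ H] [CompleteSpace H]
    (B P : H →L[ℂ] H) : ℝ :=
  sSup {l : ℝ | 0 ≤ l ∧ (B - (l : ℂ) • P).IsPositive}

abbrev E2 := EuclideanSpace ℂ (Fin 2)

open ContinuousLinearMap

variable {H : Type*} [NormedAddCommGroup H] [InnerProductSpace ℂ H] [CompleteSpace H]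

lemma smulPos {T : H →L[ℂ] H} {r : ℝ} (hr : 0 ≤ r) (hT : T.IsPositive) :
    ((r : ℂ) • T).IsPositive := by
  refine ⟨ContinuousLinearMap.isSelfAdjoint_iff_isSymmetric.mp (IsSelfAdjoint.smul ?_ hT.isSelfAdjoint), fun x => ?_⟩
  · exact (Complex.conj_ofReal r) -- isSelfAdjoint (r:ℂ)
  · have := hT.2 x
    simp only [reApplyInnerSelf, smul_apply, inner_smul_left, Complex.conj_ofReal]
    have h2 : RCLike.re ((r:ℂ) * inner ℂ (T x) x) = r * RCLike.re (inner ℂ (T x) x : ℂ) :=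
      Complex.re_ofReal_mul _ _
    rw [h2]
    exact mul_nonneg hr this

lemma pos_apply_eq_zero {M : H →L[ℂ] H} (hM : M.IsPositive) {x : H}
    (hx : RCLike.re (inner ℂ (M x) x : ℂ) = 0) : M x = 0 := by
  by_contra hne
  set y := M x with hy
  have hsa : ∀ u v : H, (inner ℂ (M u) v : ℂ) = inner ℂ u (M v) := fun u v => by
    have := hM.isSelfAdjoint
    rw [isSelfAdjoint_iff'] at this
    rw [← ContinuousLinearMap.adjoint_inner_left, this]
  have hK : 0 ≤ RCLike.re (inner ℂ (M y) y : ℂ) := hM.2 y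
  set K := RCLike.re (inner ℂ (M y) y : ℂ) with hKdef
  have hyne : 0 < ‖y‖ ^ 2 := by
    have hy0 : y ≠ 0 := hne
    have := norm_pos_iff.mpr hy0
    positivity
  set s : ℝ := ‖y‖ ^ 2 / (K + 1) with hs
  have hspos : 0 < s := div_pos hyne (by linarith)
  have hq : 0 ≤ RCLike.re (inner ℂ (M (x - s • y)) (x - s • y) : ℂ) := hM.2 _
  have hexp : (inner ℂ (M (x - (s:ℂ) • y)) (x - (s:ℂ) • y) : ℂ)
      = inner ℂ (M x) x - (s:ℂ) * inner ℂ y y - (s:ℂ) * inner ℂ y y + (s:ℂ)^2 * inner ℂ (M y) y := by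
    rw [map_sub, map_smul]
    rw [inner_sub_left, inner_sub_right, inner_sub_right, inner_smul_left, inner_smul_left,
      inner_smul_right, inner_smul_right]
    have h1 : (inner ℂ (M x) y : ℂ) = inner ℂ y y := by rw [← hy]
    have h2 : (inner ℂ (M y) x : ℂ) = inner ℂ y y := by rw [hsa y x, ← hy]
    rw [h1, h2, Complex.conj_ofReal]
    ring
  have hsmul : (s • y : H) = (s:ℂ) • y := by simp [Complex.real_smul]
  rw [hsmul, hexp] at hq
  have hre : RCLike.re ((inner ℂ (M x) x : ℂ) - (s:ℂ) * inner ℂ y y - (s:ℂ) * inner ℂ y y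
      + (s:ℂ)^2 * inner ℂ (M y) y) = 0 - s * (‖y‖^2) - s * (‖y‖^2) + s^2 * K := by
    have h3 : RCLike.re (inner ℂ y y : ℂ) = ‖y‖ ^ 2 := by
      rw [← inner_self_eq_norm_sq (𝕜 := ℂ)]
    simp only [map_add, map_sub]
    rw [show ((s:ℂ)^2 : ℂ) = ((s^2 : ℝ) : ℂ) by push_cast; ring]
    have hh : ∀ (r : ℝ) (z : ℂ), RCLike.re ((r:ℂ) * z) = r * RCLike.re z := fun r z =>
      Complex.re_ofReal_mul r z
    rw [hh, hh, ← hy, hx, h3, ← hKdef]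
  rw [hre] at hq
  have hsK : s * K ≤ ‖y‖ ^ 2 := by
    rw [hs, div_mul_eq_mul_div, div_le_iff₀ (by linarith)]
    nlinarith
  nlinarith [hq, hspos, hyne]

lemma scalar_of_le_proj {P M : H →L[ℂ] H} (hPsa : IsSelfAdjoint P) (hPi : P ∘L P = P)
    (hrank : Module.finrank ℂ (LinearMap.range (P : H →ₗ[ℂ] H)) = 1)
    (hM : M.IsPositive) {t : ℝ} (hMP : ((t:ℂ) • P - M).IsPositive) :
    ∃ μ : ℝ, 0 ≤ μ ∧ μ ≤ t ∧ M = (μ:ℂ) • P := by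
  -- get a generator of the range
  obtain ⟨v, hv0, hvgen⟩ := finrank_eq_one_iff'.mp hrank
  set v0 : H := (v : H) with hv0def
  have hv0ne : v0 ≠ 0 := fun h => hv0 (Subtype.ext h)
  have hv0mem : v0 ∈ LinearMap.range (P : H →ₗ[ℂ] H) := v.2
  obtain ⟨u, hu⟩ := hv0mem
  have hPP : ∀ z, P (P z) = P z := fun z => by
    simpa using ContinuousLinearMap.ext_iff.mp hPi z
  have hPv0 : P v0 = v0 := by
    have hu' : P u = v0 := hu
    rw [← hu']; exact hPP u
  -- every element of range P is a multiple of v0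
  have hgen : ∀ x : H, ∃ c : ℂ, P x = c • v0 := by
    intro x
    obtain ⟨c, hc⟩ := hvgen ⟨P x, ⟨x, rfl⟩⟩
    exact ⟨c, by simpa [hv0def] using congrArg (Subtype.val) hc.symm⟩
  -- M vanishes on ker P
  have hker : ∀ x : H, P x = 0 → M x = 0 := by
    intro x hx
    apply pos_apply_eq_zero hM
    have h1 := hM.2 x
    have h2 := hMP.2 x
    simp only [ContinuousLinearMap.reApplyInnerSelf_apply] at h1 h2 ⊢
    rw [ContinuousLinearMap.sub_apply, ContinuousLinearMap.smul_apply, hx, smul_zero,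
      zero_sub, inner_neg_left, map_neg] at h2
    linarith
  -- M = M ∘ P
  have hMP' : ∀ x : H, M x = M (P x) := by
    intro x
    have : P (x - P x) = 0 := by
      rw [map_sub, hPP x, sub_self]
    have := hker _ this
    rw [map_sub, sub_eq_zero] at this
    exact this
  -- M = P ∘ M
  have hPM : ∀ x : H, M x = P (M x) := by
    intro x
    have hcomp : M = M ∘L P := by
      ext z; simp only [ContinuousLinearMap.coe_comp', Function.comp_apply]; exact hMP' z
    have hsa : IsSelfAdjoint M := hM.isSelfAdjoint
    have : M = P ∘L M := by
      calc M = ContinuousLinearMap.adjoint M := (isSelfAdjoint_iff'.mp hsa).symm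
      _ = ContinuousLinearMap.adjoint (M ∘L P) := by rw [← hcomp]
      _ = ContinuousLinearMap.adjoint P ∘L ContinuousLinearMap.adjoint M := by
          rw [ContinuousLinearMap.adjoint_comp]
      _ = P ∘L M := by rw [isSelfAdjoint_iff'.mp hPsa, isSelfAdjoint_iff'.mp hsa]
    conv_lhs => rw [this]
    rfl
  -- M v0 = d • v0
  have hMv0 : ∃ d : ℂ, M v0 = d • v0 := by
    obtain ⟨d, hd⟩ := hgen (M v0)
    refine ⟨d, ?_⟩
    rw [hPM v0]; exact hd
  obtain ⟨d, hd⟩ := hMv0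
  -- M x = d • P x for all x
  have hMeq : ∀ x : H, M x = d • P x := by
    intro x
    obtain ⟨c, hc⟩ := hgen x
    calc M x = M (P x) := hMP' x
    _ = M (c • v0) := by rw [hc]
    _ = c • M v0 := by rw [map_smul]
    _ = c • (d • v0) := by rw [hd]
    _ = d • (c • v0) := smul_comm c d v0
    _ = d • P x := by rw [← hc]
  -- d is a nonneg real ≤ t
  have hvnorm : (0:ℝ) < ‖v0‖^2 := by
    have := norm_pos_iff.mpr hv0ne; positivity
  have hinner : (inner ℂ (M v0) v0 : ℂ) = (starRingEnd ℂ) d * (‖v0‖^2 : ℝ) := by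
    rw [hd, inner_smul_left, inner_self_eq_norm_sq_to_K]; norm_cast
  have hne0 : ((‖v0‖^2 : ℝ) : ℂ) ≠ 0 := by
    exact_mod_cast ne_of_gt hvnorm
  have hre : RCLike.re ((starRingEnd ℂ) d * ((‖v0‖^2:ℝ):ℂ)) = d.re * ‖v0‖^2 := by
    simp [Complex.mul_re, Complex.conj_re, Complex.conj_im, ← Complex.ofReal_pow]
  have hdr := (isPositive_iff_complex M).mp hM v0
  have hdreal : ((d.re : ℂ)) = d ∧ 0 ≤ d.re := by
    obtain ⟨h1, h2⟩ := hdr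
    rw [hinner] at h1 h2
    rw [hre] at h1 h2
    constructor
    · have hcd : (starRingEnd ℂ) d = ((d.re:ℂ)) := by
        apply mul_right_cancel₀ hne0
        rw [← h1]; push_cast; ring
      calc ((d.re:ℂ)) = (starRingEnd ℂ) ((d.re:ℂ)) := (Complex.conj_ofReal _).symm
      _ = (starRingEnd ℂ) ((starRingEnd ℂ) d) := by rw [hcd]
      _ = d := Complex.conj_conj d
    · nlinarith
  have hmeqq : ((d.re:ℂ)) = d := hdreal.1
  refine ⟨d.re, hdreal.2, ?_, ?_⟩
  · -- μ ≤ t from hMP at v0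
    have h2 := hMP.2 v0
    simp only [ContinuousLinearMap.reApplyInnerSelf_apply, ContinuousLinearMap.sub_apply,
      ContinuousLinearMap.smul_apply, hPv0, hd] at h2
    rw [inner_sub_left, inner_smul_left, inner_smul_left, inner_self_eq_norm_sq_to_K,
      Complex.conj_ofReal] at h2
    rw [map_sub] at h2
    have h2' : 0 ≤ ((t:ℂ) * (‖v0‖:ℂ)^2).re - ((starRingEnd ℂ) d * (‖v0‖:ℂ)^2).re := h2
    have e1 : ((t:ℂ) * (‖v0‖:ℂ)^2).re = t * ‖v0‖^2 := by
      simp [Complex.mul_re, ← Complex.ofReal_pow]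
    have e2 : (((starRingEnd ℂ) d) * (‖v0‖:ℂ)^2).re = d.re * ‖v0‖^2 := by
      simp [Complex.mul_re, Complex.conj_re, Complex.conj_im, ← Complex.ofReal_pow]
    rw [e1, e2] at h2'
    nlinarith
  · ext x
    have hx : M x = ((d.re:ℂ)) • P x := by rw [hmeqq] ; exact hMeq x
    simpa using hx

lemma proj_isPositive {P : H →L[ℂ] H} (hPsa : IsSelfAdjoint P) (hPi : P ∘L P = P) :
    P.IsPositive := by
  refine ⟨ContinuousLinearMap.isSelfAdjoint_iff_isSymmetric.mp hPsa, fun x => ?_⟩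
  have hPP : P (P x) = P x := by simpa using ContinuousLinearMap.ext_iff.mp hPi x
  have hsa : ∀ u v : H, (inner ℂ (P u) v : ℂ) = inner ℂ u (P v) := fun u v => by
    rw [← ContinuousLinearMap.adjoint_inner_left, isSelfAdjoint_iff'.mp hPsa]
  rw [ContinuousLinearMap.reApplyInnerSelf_apply, ← hPP, hsa]
  exact inner_self_nonneg

set_option maxHeartbeats 1000000 in
lemma main_lemma {P : E2 →L[ℂ] E2} (hPsa : IsSelfAdjoint P) (hPi : P ∘L P = P)
    (hrank : Module.finrank ℂ (LinearMap.range (P : E2 →ₗ[ℂ] E2)) = 1)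
    {l1 l2 : ℝ} (hl2 : 0 < l2) (hl21 : l2 < l1) (hl1 : l1 < 1)
    {C : E2 →L[ℂ] E2} (hC : IsEffect C) (hco : Coexistent ((l1 : ℂ) • P) C) :
    Coexistent ((l1 : ℂ) • P + (l2 : ℂ) • ((1 : E2 →L[ℂ] E2) - P)) C := by
  obtain ⟨M, N, hMeff, hNeff, hM1, hN1, hsum⟩ := hco
  obtain ⟨μ, hμ0, hμl1, hMμ⟩ := scalar_of_le_proj hPsa hPi hrank hMeff.1 hM1
  -- N = C - μ P
  have hNC : N = C - (μ:ℂ) • P := by rw [← hsum, hMμ]; abel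
  have hP_pos : P.IsPositive := proj_isPositive hPsa hPi
  have hQ_pos : ((1 : E2 →L[ℂ] E2) - P).IsPositive := by
    apply proj_isPositive
    · show star _ = _
      rw [star_sub, star_one, hPsa.star_eq]
    · show ((1 : E2 →L[ℂ] E2) - P) * ((1 : E2 →L[ℂ] E2) - P) = (1 : E2 →L[ℂ] E2) - P
      have hPi' : P * P = P := hPi
      simp only [sub_mul, mul_sub, one_mul, mul_one, hPi']; abel
  have hC0 : C.IsPositive := hC.1
  have hC1 : ((1 : E2 →L[ℂ] E2) - C).IsPositive := hC.2
  have hCM : (C - (μ:ℂ) • P).IsPositive := by rw [← hNC]; exact hNeff.1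
  have hIC : (((1 : E2 →L[ℂ] E2) - C) - (((l1 - μ : ℝ)):ℂ) • P).IsPositive := by
    have : ((1 : E2 →L[ℂ] E2) - C) - (((l1 - μ : ℝ)):ℂ) • P
        = ((1 : E2 →L[ℂ] E2) - (l1:ℂ) • P) - N := by
      rw [hNC]; push_cast; module
    rw [this]; exact hN1
  -- scalar setup
  set c : ℝ := max 0 ((1 - l2) * μ - l2 * (1 - l1)) with hc
  have hc0 : 0 ≤ c := le_max_left _ _
  have hc1 : c ≤ (1 - l2) * μ := by
    apply max_le
    · nlinarith
    · nlinarith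
  have hc2 : c ≤ l1 - l2 + l2 * (l1 - μ) := by
    apply max_le
    · nlinarith
    · nlinarith
  have hc3 : (1 - l2) * μ - l2 * (1 - l1) ≤ c := le_max_right _ _
  -- the new decomposition
  set A : E2 →L[ℂ] E2 := (l1 : ℂ) • P + (l2 : ℂ) • ((1 : E2 →L[ℂ] E2) - P) with hA
  set M' : E2 →L[ℂ] E2 := (c:ℂ) • P + (l2:ℂ) • C with hM'
  set N' : E2 →L[ℂ] E2 := C - M' with hN'
  have hIA : ((1 : E2 →L[ℂ] E2) - A).IsPositive := by
    have : (1 : E2 →L[ℂ] E2) - A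
        = ((1 - l1 : ℝ):ℂ) • P + ((1 - l2 : ℝ):ℂ) • ((1 : E2 →L[ℂ] E2) - P) := by
      rw [hA]; push_cast; module
    rw [this]
    exact (smulPos (by linarith) hP_pos).add (smulPos (by linarith) hQ_pos)
  have hA_pos : A.IsPositive :=
    (smulPos (by linarith) hP_pos).add (smulPos (by linarith) hQ_pos)
  have hAM' : (A - M').IsPositive := by
    have : A - M' = (l2:ℂ) • (((1 : E2 →L[ℂ] E2) - C) - ((l1 - μ : ℝ):ℂ) • P)
        + ((l1 - c - l2 + l2 * (l1 - μ) : ℝ):ℂ) • P := by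
      rw [hA, hM']; push_cast; module
    rw [this]
    exact (smulPos (by linarith) hIC).add (smulPos (by linarith) hP_pos)
  have hIAN' : (((1 : E2 →L[ℂ] E2) - A) - N').IsPositive := by
    have : ((1 : E2 →L[ℂ] E2) - A) - N'
        = ((1 - l2 : ℝ):ℂ) • (((1 : E2 →L[ℂ] E2) - C) - ((l1 - μ : ℝ):ℂ) • P)
        + ((c - ((1 - l2) * μ - l2 * (1 - l1)) : ℝ):ℂ) • P := by
      rw [hN', hM', hA]; push_cast; module
    rw [this]
    exact (smulPos (by linarith) hIC).add (smulPos (by linarith) hP_pos)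
  have hM'pos : M'.IsPositive :=
    (smulPos hc0 hP_pos).add (smulPos (by linarith) hC0)
  have hN'pos : N'.IsPositive := by
    have : N' = ((1 - l2 : ℝ):ℂ) • (C - (μ:ℂ) • P) + (((1 - l2) * μ - c : ℝ):ℂ) • P := by
      rw [hN', hM']; push_cast; module
    rw [this]
    exact (smulPos (by linarith) hCM).add (smulPos (by linarith) hP_pos)
  refine ⟨M', N', ⟨hM'pos, ?_⟩, ⟨hN'pos, ?_⟩, hAM', hIAN', by rw [hN']; abel⟩
  · have : (1 : E2 →L[ℂ] E2) - M' = (A - M') + ((1 : E2 →L[ℂ] E2) - A) := by abel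
    rw [this]; exact hAM'.add hIA
  · have : (1 : E2 →L[ℂ] E2) - N' = (((1 : E2 →L[ℂ] E2) - A) - N') + A := by abel
    rw [this]; exact hIAN'.add hA_pos



lemma coexistent_one_sub {X C : H →L[ℂ] H} (h : Coexistent X C) :
    Coexistent ((1 : H →L[ℂ] H) - X) C := by
  obtain ⟨M, N, hM, hN, h1, h2, hs⟩ := h
  refine ⟨N, M, hN, hM, h2, ?_, by rw [add_comm]; exact hs⟩
  rwa [sub_sub_cancel]

lemma rank_one_sub {P : E2 →L[ℂ] E2} (hPi : P ∘L P = P)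
    (hrank : Module.finrank ℂ (LinearMap.range (P : E2 →ₗ[ℂ] E2)) = 1) :
    Module.finrank ℂ (LinearMap.range (((1 : E2 →L[ℂ] E2) - P) : E2 →ₗ[ℂ] E2)) = 1 := by
  have hPP : ∀ z, P (P z) = P z := fun z => by
    simpa using ContinuousLinearMap.ext_iff.mp hPi z
  have hre : LinearMap.range (((1 : E2 →L[ℂ] E2) - P) : E2 →ₗ[ℂ] E2)
      = LinearMap.ker (P : E2 →ₗ[ℂ] E2) := by
    ext x
    simp only [LinearMap.mem_range, LinearMap.mem_ker]
    constructor
    · rintro ⟨y, rfl⟩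
      have h1 : (((1 : E2 →L[ℂ] E2) - P) : E2 →ₗ[ℂ] E2) y = y - P y := by simp
      rw [h1]
      have : (P : E2 →ₗ[ℂ] E2) (y - P y) = P (y - P y) := rfl
      rw [this, map_sub, hPP y, sub_self]
    · intro hx
      refine ⟨x, ?_⟩
      have hx' : P x = 0 := hx
      have h1 : (((1 : E2 →L[ℂ] E2) - P) : E2 →ₗ[ℂ] E2) x = x - P x := by simp
      rw [h1, hx', sub_zero]
  rw [hre]
  have h2 : Module.finrank ℂ (LinearMap.range (P : E2 →ₗ[ℂ] E2))
      + Module.finrank ℂ (LinearMap.ker (P : E2 →ₗ[ℂ] E2)) = 2 := by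
    rw [LinearMap.finrank_range_add_finrank_ker]
    simp [finrank_euclideanSpace]
  omega

theorem coexistent_subsets_for_spectral_parts (P : E2 →L[ℂ] E2)
    (hP : IsRankOneProjection P) (l1 l2 : ℝ)
    (hl2 : 0 < l2) (hl21 : l2 < l1) (hl1 : l1 < 1)
    (A : E2 →L[ℂ] E2) (hA : A = (l1 : ℂ) • P + (l2 : ℂ) • ((1 : E2 →L[ℂ] E2) - P)) :
    (∀ C : E2 →L[ℂ] E2, IsEffect C → Coexistent ((l1 : ℂ) • P) C → Coexistent A C) ∧
    (∀ C : E2 →L[ℂ] E2, IsEffect C →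
      Coexistent (((1 - l2 : ℝ) : ℂ) • ((1 : E2 →L[ℂ] E2) - P)) C → Coexistent A C) := by
  obtain ⟨hPsa, hPi, hrank⟩ := hP
  constructor
  · intro C hC hco
    rw [hA]
    exact main_lemma hPsa hPi hrank hl2 hl21 hl1 hC hco
  · intro C hC hco
    have hQsa : IsSelfAdjoint ((1 : E2 →L[ℂ] E2) - P) := by
      rw [isSelfAdjoint_iff'] at hPsa ⊢
      rw [map_sub, hPsa]
      congr 1
      exact ContinuousLinearMap.adjoint_id
    have hQi : ((1 : E2 →L[ℂ] E2) - P) ∘L ((1 : E2 →L[ℂ] E2) - P)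
        = (1 : E2 →L[ℂ] E2) - P := by
      show ((1 : E2 →L[ℂ] E2) - P) * ((1 : E2 →L[ℂ] E2) - P) = (1 : E2 →L[ℂ] E2) - P
      have hPi' : P * P = P := hPi
      simp only [sub_mul, mul_sub, one_mul, mul_one, hPi']; abel
    have hQrank := rank_one_sub hPi hrank
    have h := main_lemma (l1 := 1 - l2) (l2 := 1 - l1) hQsa hQi hQrank
      (by linarith) (by linarith) (by linarith) hC hco
    have hB : ((1 - l2 : ℝ) : ℂ) • ((1 : E2 →L[ℂ] E2) - P)
        + ((1 - l1 : ℝ) : ℂ) • ((1 : E2 →L[ℂ] E2) - ((1 : E2 →L[ℂ] E2) - P))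
        = (1 : E2 →L[ℂ] E2) - A := by
      rw [hA]; push_cast; module
    rw [hB] at h
    have h2 := coexistent_one_sub h
    rwa [sub_sub_cancel] at h2
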